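/- Let α and η' be real numbers with 0 < α < 1, and set τ̃ = (1/2)·[[2−α², αη'],[αη', α²]], L₀ = [[1/√(2−α²), 0],[0, 1]], L₁ = [[0,0],[√((1−α²)/(2−α²)), 0]] as 2×2 complex matrices. Then L₀ᴴL₀ + L₁ᴴL₁ = I₂, and L₀ τ̃ L₀ᴴ + L₁ τ̃ L₁ᴴ = Σ( αη'/√(2−α²) ). -/

import Mathlib

open Matrix

noncomputable def SigmaState (x : ℝ) : Matrix (Fin 2) (Fin 2) ℂ :=
  !![1 / 2, x / 2; x / 2, 1 / 2]

noncomputable def tauTilde (α η' : ℝ) : Matrix (Fin 2) (Fin 2) ℂ :=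
  (1 / 2 : ℂ) • (!![2 - α ^ 2, α * η'; α * η', α ^ 2] : Matrix (Fin 2) (Fin 2) ℂ)

noncomputable def L0 (α : ℝ) : Matrix (Fin 2) (Fin 2) ℂ :=
  !![1 / Real.sqrt (2 - α ^ 2), 0; 0, 1]

noncomputable def L1 (α : ℝ) : Matrix (Fin 2) (Fin 2) ℂ :=
  !![0, 0; Real.sqrt ((1 - α ^ 2) / (2 - α ^ 2)), 0]

theorem catalyst_restoring_channel (α η' : ℝ) (h0 : 0 < α) (h1 : α < 1) :
    (L0 α)ᴴ * L0 α + (L1 α)ᴴ * L1 α = 1 ∧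
    L0 α * tauTilde α η' * (L0 α)ᴴ + L1 α * tauTilde α η' * (L1 α)ᴴ
      = SigmaState (α * η' / Real.sqrt (2 - α ^ 2)) := by


  have h2 : (0:ℝ) < 2 - α ^ 2 := by nlinarith
  have h1a : (0:ℝ) ≤ 1 - α ^ 2 := by nlinarith
  have hssq : Real.sqrt (2 - α ^ 2) ^ 2 = 2 - α ^ 2 := Real.sq_sqrt h2.le
  have htsq : Real.sqrt ((1 - α ^ 2) / (2 - α ^ 2)) ^ 2 = (1 - α ^ 2) / (2 - α ^ 2) :=
    Real.sq_sqrt (div_nonneg h1a h2.le)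
  have hsne : Real.sqrt (2 - α ^ 2) ≠ 0 := (Real.sqrt_pos.mpr h2).ne'
  have h2c : ((2:ℂ) - (α:ℂ) ^ 2) ≠ 0 := by exact_mod_cast h2.ne'
  have h1sqc : ((Real.sqrt (1 - α ^ 2)):ℂ) ^ 2 = 1 - (α:ℂ) ^ 2 := by
    exact_mod_cast congrArg (Complex.ofReal) (Real.sq_sqrt h1a)
  have hsnec : ((Real.sqrt (2 - α ^ 2)):ℂ) ≠ 0 := by exact_mod_cast hsne
  have hssqc : ((Real.sqrt (2 - α ^ 2)):ℂ) ^ 2 = 2 - (α:ℂ) ^ 2 := by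
    exact_mod_cast congrArg (Complex.ofReal) hssq
  have htsqc : ((Real.sqrt ((1 - α ^ 2) / (2 - α ^ 2))):ℂ) ^ 2
      = (1 - (α:ℂ) ^ 2) / (2 - (α:ℂ) ^ 2) := by
    exact_mod_cast congrArg (Complex.ofReal) htsq
  have hw0 : (0:ℝ) ≤ -(α ^ 2 * (2 - α ^ 2)⁻¹) + (2 - α ^ 2)⁻¹ := by
    rw [show (-(α ^ 2 * (2 - α ^ 2)⁻¹) + (2 - α ^ 2)⁻¹ : ℝ) = (1 - α ^ 2) / (2 - α ^ 2) by ring]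
    exact div_nonneg h1a h2.le
  constructor
  · ext i j
    fin_cases i <;> fin_cases j <;>
      simp [L0, L1, Matrix.conjTranspose_apply, Matrix.mul_apply, Fin.sum_univ_two,
        Matrix.one_apply] <;>
    field_simp <;>
    · first
      | linear_combination h1sqc - hssqc
      | (simp only [hssqc, h1sqc, htsqc]; field_simp; ring)
  · ext i j
    fin_cases i <;> fin_cases j <;>
      simp [L0, L1, tauTilde, SigmaState, Matrix.conjTranspose_apply, Matrix.mul_apply,
        Matrix.smul_apply, Matrix.vecMul, dotProduct, Fin.sum_univ_two] <;>
    field_simp <;>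
    ring_nf <;>
    first
      | tauto
      | linear_combination (-2 : ℂ) * hssqc
      | linear_combination (4 * (α:ℂ) ^ 2 - 4) * hssqc + (8 - 4 * (α:ℂ) ^ 2) * h1sqc
      | (simp only [← Complex.ofReal_pow, Real.sq_sqrt h2.le, Real.sq_sqrt h1a, Real.sq_sqrt hw0]; push_cast; field_simp; ring)
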